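/- For every positive integer n, every integer r ≥ 2, and every integer x, n divides both ∑_{k=0}^{n-1} (2k+1) S_k^{(r)}(x) and ∑_{k=0}^{n-1} (-1)^k (2k+1) S_k^{(r)}(x), where S_k^{(r)}(x) = ∑_{j=0}^{k} C(k,j)^r C(k+j,j)^r x^j. -/

import Mathlib

open Finset

private lemma zsucc (n k : ℕ) : ((n:ℤ)+1) * (n.choose k : ℤ) = ((n+1).choose (k+1) : ℤ) * ((k:ℤ)+1) := by
  have h := Nat.add_one_mul_choose_eq n k
  have h2 : ((n.succ * n.choose k : ℕ) : ℤ) = ((n.succ.choose k.succ * k.succ : ℕ) : ℤ) := by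
    rw [h]
  push_cast at h2
  linarith

private lemma zright (n k : ℕ) : (n.choose (k+1) : ℤ) * ((k:ℤ)+1) = (n.choose k : ℤ) * ((n:ℤ) - (k:ℤ)) := by
  rcases le_or_gt k n with h | h
  · have h1 := Nat.choose_succ_right_eq n k
    have h2 : ((n.choose (k+1) * (k+1) : ℕ) : ℤ) = ((n.choose k * (n - k) : ℕ) : ℤ) := by
      rw [h1]
    rwa [Nat.cast_mul, Nat.cast_mul, Nat.cast_sub h, Nat.cast_add, Nat.cast_one] at h2
  · rw [Nat.choose_eq_zero_of_lt h, Nat.choose_eq_zero_of_lt (h.trans (Nat.lt_succ_self k))]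
    ring

private lemma zabsorb (n k : ℕ) : ((n:ℤ) + 1 - (k:ℤ)) * ((n+1).choose k : ℤ) = ((n:ℤ)+1) * (n.choose k : ℤ) := by
  have h1 := zright (n+1) k
  have h2 := zsucc n k
  push_cast at h1
  linear_combination (-1 : ℤ) * h1 - h2

private def gg (ℓ i j k : ℕ) : ℤ :=
  -2 * (k:ℤ) * ((i:ℤ)+1) * ((j:ℤ)+1) *
    (((i+j).choose k : ℤ) * (k.choose (i+1) : ℤ) * (k.choose (j+1) : ℤ) *
      ((ℓ+1).choose k : ℤ) * ((ℓ+k).choose k : ℤ))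

private lemma cert (ℓ i j k : ℕ) :
    ((ℓ:ℤ)+1) * ( ((ℓ:ℤ)+1-(i:ℤ)) * ((ℓ:ℤ)+1-(j:ℤ)) *
        (((i+j).choose k : ℤ) * (k.choose i : ℤ) * (k.choose j : ℤ) *
          ((ℓ+1).choose k : ℤ) * ((ℓ+1+k).choose k : ℤ))
      - ((ℓ:ℤ)+1+(i:ℤ)) * ((ℓ:ℤ)+1+(j:ℤ)) *
        (((i+j).choose k : ℤ) * (k.choose i : ℤ) * (k.choose j : ℤ) *
          (ℓ.choose k : ℤ) * ((ℓ+k).choose k : ℤ)) )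
    = gg ℓ i j (k+1) - gg ℓ i j k := by
  have h1 : ((ℓ:ℤ)+1) * ((ℓ+1+k).choose k : ℤ) = ((ℓ:ℤ)+1+(k:ℤ)) * ((ℓ+k).choose k : ℤ) := by
    rw [show ℓ+1+k = (ℓ+k)+1 from by omega]
    have h := zabsorb (ℓ+k) k
    push_cast at h
    linear_combination h
  have h2 : ((ℓ:ℤ)+1) * (ℓ.choose k : ℤ) = ((ℓ:ℤ)+1-(k:ℤ)) * ((ℓ+1).choose k : ℤ) :=
    (zabsorb ℓ k).symm
  have h3 : (k.choose (i+1) : ℤ) * ((i:ℤ)+1) = (k.choose i : ℤ) * ((k:ℤ)-(i:ℤ)) := zright k i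
  have h4 : (k.choose (j+1) : ℤ) * ((j:ℤ)+1) = (k.choose j : ℤ) * ((k:ℤ)-(j:ℤ)) := zright k j
  have h5 : ((i+j).choose (k+1) : ℤ) * ((k:ℤ)+1)
      = ((i+j).choose k : ℤ) * ((i:ℤ)+(j:ℤ)-(k:ℤ)) := by
    have h := zright (i+j) k; push_cast at h; linear_combination h
  have h6 : ((k:ℤ)+1) * (k.choose i : ℤ) = ((k+1).choose (i+1) : ℤ) * ((i:ℤ)+1) := zsucc k i
  have h7 : ((k:ℤ)+1) * (k.choose j : ℤ) = ((k+1).choose (j+1) : ℤ) * ((j:ℤ)+1) := zsucc k j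
  have h8 : ((ℓ+1).choose (k+1) : ℤ) * ((k:ℤ)+1)
      = ((ℓ+1).choose k : ℤ) * ((ℓ:ℤ)+1-(k:ℤ)) := by
    have h := zright (ℓ+1) k; push_cast at h; linear_combination h
  have h9 : ((ℓ:ℤ)+(k:ℤ)+1) * ((ℓ+k).choose k : ℤ)
      = ((ℓ+(k+1)).choose (k+1) : ℤ) * ((k:ℤ)+1) := by
    rw [show ℓ+(k+1) = (ℓ+k)+1 from by omega]
    have h := zsucc (ℓ+k) k; push_cast at h; linear_combination h
  have E1 : ((ℓ:ℤ)+1) * (((i+j).choose k : ℤ) * (k.choose i : ℤ) * (k.choose j : ℤ) *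
        ((ℓ+1).choose k : ℤ) * ((ℓ+1+k).choose k : ℤ))
      = ((ℓ:ℤ)+1+(k:ℤ)) * (((i+j).choose k : ℤ) * (k.choose i : ℤ) * (k.choose j : ℤ) *
        ((ℓ+1).choose k : ℤ) * ((ℓ+k).choose k : ℤ)) := by
    calc ((ℓ:ℤ)+1) * (((i+j).choose k : ℤ) * (k.choose i : ℤ) * (k.choose j : ℤ) *
          ((ℓ+1).choose k : ℤ) * ((ℓ+1+k).choose k : ℤ))
        = (((i+j).choose k : ℤ) * (k.choose i : ℤ) * (k.choose j : ℤ) * ((ℓ+1).choose k : ℤ)) *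
            (((ℓ:ℤ)+1) * ((ℓ+1+k).choose k : ℤ)) := by ring
      _ = (((i+j).choose k : ℤ) * (k.choose i : ℤ) * (k.choose j : ℤ) * ((ℓ+1).choose k : ℤ)) *
            (((ℓ:ℤ)+1+(k:ℤ)) * ((ℓ+k).choose k : ℤ)) := by rw [h1]
      _ = _ := by ring
  have E2 : ((ℓ:ℤ)+1) * (((i+j).choose k : ℤ) * (k.choose i : ℤ) * (k.choose j : ℤ) *
        (ℓ.choose k : ℤ) * ((ℓ+k).choose k : ℤ))
      = ((ℓ:ℤ)+1-(k:ℤ)) * (((i+j).choose k : ℤ) * (k.choose i : ℤ) * (k.choose j : ℤ) *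
        ((ℓ+1).choose k : ℤ) * ((ℓ+k).choose k : ℤ)) := by
    calc ((ℓ:ℤ)+1) * (((i+j).choose k : ℤ) * (k.choose i : ℤ) * (k.choose j : ℤ) *
          (ℓ.choose k : ℤ) * ((ℓ+k).choose k : ℤ))
        = (((i+j).choose k : ℤ) * (k.choose i : ℤ) * (k.choose j : ℤ) * ((ℓ+k).choose k : ℤ)) *
            (((ℓ:ℤ)+1) * (ℓ.choose k : ℤ)) := by ring
      _ = (((i+j).choose k : ℤ) * (k.choose i : ℤ) * (k.choose j : ℤ) * ((ℓ+k).choose k : ℤ)) *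
            (((ℓ:ℤ)+1-(k:ℤ)) * ((ℓ+1).choose k : ℤ)) := by rw [h2]
      _ = _ := by ring
  have E3 : ((i:ℤ)+1) * ((j:ℤ)+1) * (((i+j).choose k : ℤ) * (k.choose (i+1) : ℤ) *
        (k.choose (j+1) : ℤ) * ((ℓ+1).choose k : ℤ) * ((ℓ+k).choose k : ℤ))
      = ((k:ℤ)-(i:ℤ)) * ((k:ℤ)-(j:ℤ)) * (((i+j).choose k : ℤ) * (k.choose i : ℤ) *
        (k.choose j : ℤ) * ((ℓ+1).choose k : ℤ) * ((ℓ+k).choose k : ℤ)) := by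
    calc ((i:ℤ)+1) * ((j:ℤ)+1) * (((i+j).choose k : ℤ) * (k.choose (i+1) : ℤ) *
          (k.choose (j+1) : ℤ) * ((ℓ+1).choose k : ℤ) * ((ℓ+k).choose k : ℤ))
        = (((i+j).choose k : ℤ) * ((ℓ+1).choose k : ℤ) * ((ℓ+k).choose k : ℤ)) *
            ((k.choose (i+1) : ℤ) * ((i:ℤ)+1)) * ((k.choose (j+1) : ℤ) * ((j:ℤ)+1)) := by ring
      _ = (((i+j).choose k : ℤ) * ((ℓ+1).choose k : ℤ) * ((ℓ+k).choose k : ℤ)) *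
            ((k.choose i : ℤ) * ((k:ℤ)-(i:ℤ))) * ((k.choose j : ℤ) * ((k:ℤ)-(j:ℤ))) := by
          rw [h3, h4]
      _ = _ := by ring
  have E4 : ((k:ℤ)+1)^3 * ((i:ℤ)+1) * ((j:ℤ)+1) * (((i+j).choose (k+1) : ℤ) *
        ((k+1).choose (i+1) : ℤ) * ((k+1).choose (j+1) : ℤ) * ((ℓ+1).choose (k+1) : ℤ) *
        ((ℓ+(k+1)).choose (k+1) : ℤ))
      = ((i:ℤ)+(j:ℤ)-(k:ℤ)) * ((k:ℤ)+1)^2 * ((ℓ:ℤ)+1-(k:ℤ)) * ((ℓ:ℤ)+(k:ℤ)+1) *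
        (((i+j).choose k : ℤ) * (k.choose i : ℤ) * (k.choose j : ℤ) *
          ((ℓ+1).choose k : ℤ) * ((ℓ+k).choose k : ℤ)) := by
    calc ((k:ℤ)+1)^3 * ((i:ℤ)+1) * ((j:ℤ)+1) * (((i+j).choose (k+1) : ℤ) *
          ((k+1).choose (i+1) : ℤ) * ((k+1).choose (j+1) : ℤ) * ((ℓ+1).choose (k+1) : ℤ) *
          ((ℓ+(k+1)).choose (k+1) : ℤ))
        = (((i+j).choose (k+1) : ℤ) * ((k:ℤ)+1)) * (((k+1).choose (i+1) : ℤ) * ((i:ℤ)+1)) *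
            (((k+1).choose (j+1) : ℤ) * ((j:ℤ)+1)) * (((ℓ+1).choose (k+1) : ℤ) * ((k:ℤ)+1)) *
            (((ℓ+(k+1)).choose (k+1) : ℤ) * ((k:ℤ)+1)) := by ring
      _ = (((i+j).choose k : ℤ) * ((i:ℤ)+(j:ℤ)-(k:ℤ))) * (((k:ℤ)+1) * (k.choose i : ℤ)) *
            (((k:ℤ)+1) * (k.choose j : ℤ)) * (((ℓ+1).choose k : ℤ) * ((ℓ:ℤ)+1-(k:ℤ))) *
            (((ℓ:ℤ)+(k:ℤ)+1) * ((ℓ+k).choose k : ℤ)) := by rw [h5, ← h6, ← h7, h8, ← h9]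
      _ = _ := by ring
  have hM : ((ℓ:ℤ)+1) * ((k:ℤ)+1)^3 * ((i:ℤ)+1) * ((j:ℤ)+1) ≠ 0 := by positivity
  apply mul_left_cancel₀ hM
  simp only [gg]
  push_cast
  linear_combination
      (((ℓ:ℤ)+1) * ((k:ℤ)+1)^3 * ((i:ℤ)+1) * ((j:ℤ)+1) * (((ℓ:ℤ)+1-(i:ℤ)) * ((ℓ:ℤ)+1-(j:ℤ)))) * E1
    - (((ℓ:ℤ)+1) * ((k:ℤ)+1)^3 * ((i:ℤ)+1) * ((j:ℤ)+1) * (((ℓ:ℤ)+1+(i:ℤ)) * ((ℓ:ℤ)+1+(j:ℤ)))) * E2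
    - (2 * (k:ℤ) * ((ℓ:ℤ)+1) * ((k:ℤ)+1)^3 * ((i:ℤ)+1) * ((j:ℤ)+1)) * E3
    + (2 * ((ℓ:ℤ)+1) * ((k:ℤ)+1) * ((i:ℤ)+1) * ((j:ℤ)+1)) * E4

private lemma recP (i j ℓ : ℕ) :
    ((ℓ:ℤ)+1)^2 * (((ℓ:ℤ)+1-(i:ℤ)) * ((ℓ:ℤ)+1-(j:ℤ))) *
      (((ℓ+1).choose i : ℤ) * ((ℓ+1+i).choose i : ℤ) * ((ℓ+1).choose j : ℤ) * ((ℓ+1+j).choose j : ℤ))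
    = ((ℓ:ℤ)+1)^2 * (((ℓ:ℤ)+1+(i:ℤ)) * ((ℓ:ℤ)+1+(j:ℤ))) *
      ((ℓ.choose i : ℤ) * ((ℓ+i).choose i : ℤ) * (ℓ.choose j : ℤ) * ((ℓ+j).choose j : ℤ)) := by
  have h1 : ((ℓ:ℤ)+1-(i:ℤ)) * ((ℓ+1).choose i : ℤ) = ((ℓ:ℤ)+1) * (ℓ.choose i : ℤ) := zabsorb ℓ i
  have h2 : ((ℓ:ℤ)+1) * ((ℓ+1+i).choose i : ℤ) = ((ℓ:ℤ)+1+(i:ℤ)) * ((ℓ+i).choose i : ℤ) := by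
    rw [show ℓ+1+i = (ℓ+i)+1 from by omega]
    have h := zabsorb (ℓ+i) i
    push_cast at h
    linear_combination h
  have h3 : ((ℓ:ℤ)+1-(j:ℤ)) * ((ℓ+1).choose j : ℤ) = ((ℓ:ℤ)+1) * (ℓ.choose j : ℤ) := zabsorb ℓ j
  have h4 : ((ℓ:ℤ)+1) * ((ℓ+1+j).choose j : ℤ) = ((ℓ:ℤ)+1+(j:ℤ)) * ((ℓ+j).choose j : ℤ) := by
    rw [show ℓ+1+j = (ℓ+j)+1 from by omega]
    have h := zabsorb (ℓ+j) j
    push_cast at h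
    linear_combination h
  calc ((ℓ:ℤ)+1)^2 * (((ℓ:ℤ)+1-(i:ℤ)) * ((ℓ:ℤ)+1-(j:ℤ))) *
      (((ℓ+1).choose i : ℤ) * ((ℓ+1+i).choose i : ℤ) * ((ℓ+1).choose j : ℤ) * ((ℓ+1+j).choose j : ℤ))
      = (((ℓ:ℤ)+1-(i:ℤ)) * ((ℓ+1).choose i : ℤ)) * (((ℓ:ℤ)+1) * ((ℓ+1+i).choose i : ℤ)) *
        ((((ℓ:ℤ)+1-(j:ℤ)) * ((ℓ+1).choose j : ℤ)) * (((ℓ:ℤ)+1) * ((ℓ+1+j).choose j : ℤ))) := by ring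
    _ = (((ℓ:ℤ)+1) * (ℓ.choose i : ℤ)) * (((ℓ:ℤ)+1+(i:ℤ)) * ((ℓ+i).choose i : ℤ)) *
        ((((ℓ:ℤ)+1) * (ℓ.choose j : ℤ)) * (((ℓ:ℤ)+1+(j:ℤ)) * ((ℓ+j).choose j : ℤ))) := by
        rw [h1, h2, h3, h4]
    _ = _ := by ring

private lemma sumDD_zero (i j ℓ : ℕ) (h : ℓ < i ∨ ℓ < j) :
    ∑ k ∈ range (i+j+1), (((i+j).choose k : ℤ) * (k.choose i : ℤ) * (k.choose j : ℤ) *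
      (ℓ.choose k : ℤ) * ((ℓ+k).choose k : ℤ))
    = (ℓ.choose i : ℤ) * ((ℓ+i).choose i : ℤ) * (ℓ.choose j : ℤ) * ((ℓ+j).choose j : ℤ) := by
  have hR : (ℓ.choose i : ℤ) * ((ℓ+i).choose i : ℤ) * (ℓ.choose j : ℤ) * ((ℓ+j).choose j : ℤ) = 0 := by
    rcases h with h | h
    · rw [Nat.choose_eq_zero_of_lt h]; push_cast; ring
    · rw [Nat.choose_eq_zero_of_lt h]; push_cast; ring
  rw [hR]
  apply Finset.sum_eq_zero
  intro k _
  rcases le_or_gt k ℓ with hk | hk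
  · rcases h with h | h
    · rw [Nat.choose_eq_zero_of_lt (lt_of_le_of_lt hk h)]; push_cast; ring
    · rw [Nat.choose_eq_zero_of_lt (lt_of_le_of_lt hk h)]; push_cast; ring
  · rw [Nat.choose_eq_zero_of_lt hk]; push_cast; ring

private lemma choose_symm_add (i j : ℕ) : (i+j).choose i = (i+j).choose j := by
  rw [← Nat.choose_symm (Nat.le_add_left j i)]
  congr 1
  omega

private lemma sumDD_diag (i j : ℕ) (_hij : i ≤ j) :
    ∑ k ∈ range (i+j+1), (((i+j).choose k : ℤ) * (k.choose i : ℤ) * (k.choose j : ℤ) *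
      (j.choose k : ℤ) * ((j+k).choose k : ℤ))
    = (j.choose i : ℤ) * ((j+i).choose i : ℤ) * (j.choose j : ℤ) * ((j+j).choose j : ℤ) := by
  rw [Finset.sum_eq_single_of_mem j (by simp [Finset.mem_range])]
  · rw [Nat.choose_self, show (j+i).choose i = (i+j).choose j from by
      rw [Nat.add_comm j i, choose_symm_add]]
    push_cast; ring
  · intro b _ hb
    rcases lt_or_gt_of_ne hb with hbj | hbj
    · rw [Nat.choose_eq_zero_of_lt hbj]; push_cast; ring
    · rw [Nat.choose_eq_zero_of_lt hbj]; push_cast; ring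

private lemma sumDD_diag' (i j : ℕ) (_hij : j ≤ i) :
    ∑ k ∈ range (i+j+1), (((i+j).choose k : ℤ) * (k.choose i : ℤ) * (k.choose j : ℤ) *
      (i.choose k : ℤ) * ((i+k).choose k : ℤ))
    = (i.choose i : ℤ) * ((i+i).choose i : ℤ) * (i.choose j : ℤ) * ((i+j).choose j : ℤ) := by
  rw [Finset.sum_eq_single_of_mem i (by simp [Finset.mem_range])]
  · rw [Nat.choose_self, choose_symm_add]
    push_cast; ring
  · intro b _ hb
    rcases lt_or_gt_of_ne hb with hbi | hbi
    · rw [Nat.choose_eq_zero_of_lt hbi]; push_cast; ring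
    · rw [Nat.choose_eq_zero_of_lt hbi]; push_cast; ring

private lemma sumDD (i j : ℕ) : ∀ ℓ : ℕ,
    ∑ k ∈ range (i+j+1), (((i+j).choose k : ℤ) * (k.choose i : ℤ) * (k.choose j : ℤ) *
      (ℓ.choose k : ℤ) * ((ℓ+k).choose k : ℤ))
    = (ℓ.choose i : ℤ) * ((ℓ+i).choose i : ℤ) * (ℓ.choose j : ℤ) * ((ℓ+j).choose j : ℤ) := by
  intro ℓ
  induction ℓ with
  | zero =>
    rcases Nat.eq_zero_or_pos i with hi | hi
    · rcases Nat.eq_zero_or_pos j with hj | hj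
      · subst hi; subst hj
        exact sumDD_diag 0 0 le_rfl
      · exact sumDD_zero i j 0 (Or.inr hj)
    · exact sumDD_zero i j 0 (Or.inl hi)
  | succ ℓ IH =>
    by_cases hc : i ≤ ℓ ∧ j ≤ ℓ
    · obtain ⟨hi, hj⟩ := hc
      have tele := Finset.sum_range_sub (gg ℓ i j) (i+j+2)
      have g0 : gg ℓ i j 0 = 0 := by simp [gg]
      have gend : gg ℓ i j (i+j+2) = 0 := by
        have h0 : (i+j).choose (i+j+2) = 0 := Nat.choose_eq_zero_of_lt (by omega)
        simp [gg, h0]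
      have hsum : ∑ k ∈ range (i+j+2), (((ℓ:ℤ)+1) * ( ((ℓ:ℤ)+1-(i:ℤ)) * ((ℓ:ℤ)+1-(j:ℤ)) *
            (((i+j).choose k : ℤ) * (k.choose i : ℤ) * (k.choose j : ℤ) *
              ((ℓ+1).choose k : ℤ) * ((ℓ+1+k).choose k : ℤ))
          - ((ℓ:ℤ)+1+(i:ℤ)) * ((ℓ:ℤ)+1+(j:ℤ)) *
            (((i+j).choose k : ℤ) * (k.choose i : ℤ) * (k.choose j : ℤ) *
              (ℓ.choose k : ℤ) * ((ℓ+k).choose k : ℤ)) )) = 0 := by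
        rw [Finset.sum_congr rfl (fun k _ => cert ℓ i j k), tele, g0, gend]
        ring
      have hq : ((ℓ:ℤ)+1) * ( ((ℓ:ℤ)+1-(i:ℤ)) * ((ℓ:ℤ)+1-(j:ℤ)) *
            (∑ k ∈ range (i+j+2), (((i+j).choose k : ℤ) * (k.choose i : ℤ) * (k.choose j : ℤ) *
              ((ℓ+1).choose k : ℤ) * ((ℓ+1+k).choose k : ℤ)))
          - ((ℓ:ℤ)+1+(i:ℤ)) * ((ℓ:ℤ)+1+(j:ℤ)) *
            (∑ k ∈ range (i+j+2), (((i+j).choose k : ℤ) * (k.choose i : ℤ) * (k.choose j : ℤ) *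
              (ℓ.choose k : ℤ) * ((ℓ+k).choose k : ℤ))) ) = 0 := by
        rw [Finset.mul_sum, Finset.mul_sum, ← Finset.sum_sub_distrib, Finset.mul_sum]
        exact hsum
      have hA2 : (∑ k ∈ range (i+j+2), (((i+j).choose k : ℤ) * (k.choose i : ℤ) * (k.choose j : ℤ) *
              ((ℓ+1).choose k : ℤ) * ((ℓ+1+k).choose k : ℤ)))
          = ∑ k ∈ range (i+j+1), (((i+j).choose k : ℤ) * (k.choose i : ℤ) * (k.choose j : ℤ) *
              ((ℓ+1).choose k : ℤ) * ((ℓ+1+k).choose k : ℤ)) := by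
        rw [Finset.sum_range_succ]
        have h0 : (i+j).choose (i+j+1) = 0 := Nat.choose_eq_zero_of_lt (by omega)
        rw [h0]
        push_cast
        ring
      have hB2 : (∑ k ∈ range (i+j+2), (((i+j).choose k : ℤ) * (k.choose i : ℤ) * (k.choose j : ℤ) *
              (ℓ.choose k : ℤ) * ((ℓ+k).choose k : ℤ)))
          = ∑ k ∈ range (i+j+1), (((i+j).choose k : ℤ) * (k.choose i : ℤ) * (k.choose j : ℤ) *
              (ℓ.choose k : ℤ) * ((ℓ+k).choose k : ℤ)) := by
        rw [Finset.sum_range_succ]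
        have h0 : (i+j).choose (i+j+1) = 0 := Nat.choose_eq_zero_of_lt (by omega)
        rw [h0]
        push_cast
        ring
      rw [hA2, hB2] at hq
      have hαβ : ((ℓ:ℤ)+1)^2 * (((ℓ:ℤ)+1-(i:ℤ)) * ((ℓ:ℤ)+1-(j:ℤ))) ≠ 0 := by
        have h1 : (i:ℤ) ≤ (ℓ:ℤ) := by exact_mod_cast hi
        have h2 : (j:ℤ) ≤ (ℓ:ℤ) := by exact_mod_cast hj
        have p1 : (0:ℤ) < ((ℓ:ℤ)+1)^2 := by positivity
        have p2 : (0:ℤ) < ((ℓ:ℤ)+1-(i:ℤ)) := by linarith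
        have p3 : (0:ℤ) < ((ℓ:ℤ)+1-(j:ℤ)) := by linarith
        exact ne_of_gt (mul_pos p1 (mul_pos p2 p3))
      apply mul_left_cancel₀ hαβ
      rw [recP i j ℓ, ← IH]
      linear_combination ((ℓ:ℤ)+1) * hq
    · rcases Nat.lt_or_ge (ℓ+1) i with h1 | h1
      · exact sumDD_zero i j (ℓ+1) (Or.inl h1)
      rcases Nat.lt_or_ge (ℓ+1) j with h2 | h2
      · exact sumDD_zero i j (ℓ+1) (Or.inr h2)
      by_cases h3 : j = ℓ+1
      · rw [← h3]
        exact sumDD_diag i j (by omega)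
      · have hj' : j ≤ ℓ := by omega
        have hi' : ¬ i ≤ ℓ := fun h => hc ⟨h, hj'⟩
        have h4 : i = ℓ+1 := by omega
        rw [← h4]
        exact sumDD_diag' i j (by omega)

private lemma pow_expand (j r : ℕ) : ∃ N : ℕ, ∃ a : ℕ → ℤ, ∀ ℓ : ℕ,
    ((ℓ.choose j : ℤ) * ((ℓ+j).choose j : ℤ))^r
    = ∑ m ∈ range N, a m * ((ℓ.choose m : ℤ) * ((ℓ+m).choose m : ℤ)) := by
  induction r with
  | zero =>
    refine ⟨1, fun _ => 1, fun ℓ => by simp⟩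
  | succ r IH =>
    obtain ⟨N, a, ha⟩ := IH
    refine ⟨N + j + 1,
      fun m => ∑ k ∈ range N, a k * (((k+j).choose m : ℤ) * (m.choose k : ℤ) * (m.choose j : ℤ)),
      fun ℓ => ?_⟩
    have step1 : ((ℓ.choose j : ℤ) * ((ℓ+j).choose j : ℤ))^(r+1)
        = ∑ k ∈ range N, a k * ((ℓ.choose k : ℤ) * ((ℓ+k).choose k : ℤ) *
            ((ℓ.choose j : ℤ) * ((ℓ+j).choose j : ℤ))) := by
      rw [pow_succ, ha ℓ, Finset.sum_mul]
      exact Finset.sum_congr rfl fun k _ => by ring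
    rw [step1]
    have expand : ∀ k ∈ range N,
        a k * ((ℓ.choose k : ℤ) * ((ℓ+k).choose k : ℤ) * ((ℓ.choose j : ℤ) * ((ℓ+j).choose j : ℤ)))
        = ∑ m ∈ range (N+j+1), a k * (((k+j).choose m : ℤ) * (m.choose k : ℤ) * (m.choose j : ℤ) *
            ((ℓ.choose m : ℤ) * ((ℓ+m).choose m : ℤ))) := by
      intro k hk
      have hkN : k < N := Finset.mem_range.mp hk
      have hs := sumDD k j ℓ
      have hext : ∑ m ∈ range (k+j+1), (((k+j).choose m : ℤ) * (m.choose k : ℤ) * (m.choose j : ℤ) *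
            (ℓ.choose m : ℤ) * ((ℓ+m).choose m : ℤ))
          = ∑ m ∈ range (N+j+1), (((k+j).choose m : ℤ) * (m.choose k : ℤ) * (m.choose j : ℤ) *
            (ℓ.choose m : ℤ) * ((ℓ+m).choose m : ℤ)) := by
        apply Finset.sum_subset (Finset.range_subset_range.mpr (by omega))
        intro m _ hm
        have hlt : k+j < m := by
          simp only [Finset.mem_range, not_lt] at hm
          omega
        rw [Nat.choose_eq_zero_of_lt hlt]
        push_cast
        ring
      calc a k * ((ℓ.choose k : ℤ) * ((ℓ+k).choose k : ℤ) * ((ℓ.choose j : ℤ) * ((ℓ+j).choose j : ℤ)))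
          = a k * ((ℓ.choose k : ℤ) * ((ℓ+k).choose k : ℤ) * (ℓ.choose j : ℤ) * ((ℓ+j).choose j : ℤ)) := by
            ring
        _ = a k * (∑ m ∈ range (k+j+1), (((k+j).choose m : ℤ) * (m.choose k : ℤ) * (m.choose j : ℤ) *
              (ℓ.choose m : ℤ) * ((ℓ+m).choose m : ℤ))) := by rw [hs]
        _ = a k * (∑ m ∈ range (N+j+1), (((k+j).choose m : ℤ) * (m.choose k : ℤ) * (m.choose j : ℤ) *
              (ℓ.choose m : ℤ) * ((ℓ+m).choose m : ℤ))) := by rw [hext]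
        _ = _ := by
            rw [Finset.mul_sum]
            exact Finset.sum_congr rfl fun m _ => by ring
    rw [Finset.sum_congr rfl expand, Finset.sum_comm]
    apply Finset.sum_congr rfl
    intro m _
    rw [Finset.sum_mul]
    exact Finset.sum_congr rfl fun k _ => by ring

private lemma weighted_sum (m : ℕ) : ∀ n : ℕ,
    ∑ k ∈ range n, ((2*(k:ℤ)+1) * ((k.choose m : ℤ) * ((k+m).choose m : ℤ)))
    = ((n:ℤ)-(m:ℤ)) * (n.choose m : ℤ) * ((n+m).choose (m+1) : ℤ) := by
  intro n
  induction n with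
  | zero => simp [Nat.choose_succ_self]
  | succ n IH =>
    rw [Finset.sum_range_succ, IH]
    have r1 : ((n:ℤ)+1-(m:ℤ)) * ((n+1).choose m : ℤ) = ((n:ℤ)+1) * (n.choose m : ℤ) := zabsorb n m
    have r2 : ((n+1+m).choose (m+1) : ℤ) = ((n+m).choose m : ℤ) + ((n+m).choose (m+1) : ℤ) := by
      rw [show n+1+m = (n+m)+1 from by omega]
      exact_mod_cast Nat.choose_succ_succ (n+m) m
    have r3 : ((n+m).choose (m+1) : ℤ) * ((m:ℤ)+1) = ((n+m).choose m : ℤ) * (n:ℤ) := by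
      have h := zright (n+m) m
      push_cast at h
      linear_combination h
    push_cast
    linear_combination (-(((n+1+m).choose (m+1) : ℤ))) * r1
      - (((n:ℤ)+1) * (n.choose m : ℤ)) * r2 - ((n.choose m : ℤ)) * r3

private lemma weighted_sum_alt (m : ℕ) : ∀ n : ℕ,
    ∑ k ∈ range n, ((-1:ℤ)^k * (2*(k:ℤ)+1) * ((k.choose m : ℤ) * ((k+m).choose m : ℤ)))
    = (-1:ℤ)^(n+1) * ((n:ℤ)-(m:ℤ)) * (n.choose m : ℤ) * ((n+m).choose m : ℤ) := by
  intro n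
  induction n with
  | zero =>
    rcases Nat.eq_zero_or_pos m with h | h
    · subst h; simp
    · rw [Finset.sum_range_zero, Nat.choose_eq_zero_of_lt h]
      push_cast
      ring
  | succ n IH =>
    rw [Finset.sum_range_succ, IH]
    rcases m with _ | m'
    · simp only [Nat.choose_zero_right, Nat.add_zero]
      push_cast
      ring
    · have r1 : ((n:ℤ)+1-((m'+1:ℕ):ℤ)) * ((n+1).choose (m'+1) : ℤ)
          = ((n:ℤ)+1) * (n.choose (m'+1) : ℤ) := zabsorb n (m'+1)
      have r2 : ((n+1+(m'+1)).choose (m'+1) : ℤ)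
          = ((n+(m'+1)).choose m' : ℤ) + ((n+(m'+1)).choose (m'+1) : ℤ) := by
        rw [show n+1+(m'+1) = (n+(m'+1))+1 from by omega]
        exact_mod_cast Nat.choose_succ_succ (n+(m'+1)) m'
      have r3 : ((n:ℤ)+1) * ((n+(m'+1)).choose m' : ℤ)
          = ((m':ℤ)+1) * ((n+(m'+1)).choose (m'+1) : ℤ) := by
        have h := zright (n+(m'+1)) m'
        push_cast at h
        linear_combination -h
      push_cast
      push_cast at r1
      linear_combination (-((-1:ℤ)^n) * (((n+1+(m'+1)).choose (m'+1) : ℤ))) * r1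
        + (-((-1:ℤ)^n) * ((n:ℤ)+1) * ((n.choose (m'+1) : ℤ))) * r2
        + (-((-1:ℤ)^n) * ((n.choose (m'+1) : ℤ))) * r3

private lemma dvd_aux (n m : ℕ) (hn : 0 < n) : (n:ℤ) ∣ ((n:ℤ)-(m:ℤ)) * (n.choose m : ℤ) := by
  obtain ⟨t, rfl⟩ : ∃ t, n = t+1 := ⟨n-1, by omega⟩
  refine ⟨(t.choose m : ℤ), ?_⟩
  have h := zabsorb t m
  push_cast
  linear_combination h

private lemma div_unsigned (n j r : ℕ) (hn : 0 < n) :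
    (n:ℤ) ∣ ∑ k ∈ range n, (2*(k:ℤ)+1) * ((k.choose j : ℤ)^r * ((k+j).choose j : ℤ)^r) := by
  obtain ⟨N, a, ha⟩ := pow_expand j r
  have key : ∑ k ∈ range n, (2*(k:ℤ)+1) * ((k.choose j : ℤ)^r * ((k+j).choose j : ℤ)^r)
      = ∑ m ∈ range N, a m * (((n:ℤ)-(m:ℤ)) * (n.choose m : ℤ) * ((n+m).choose (m+1) : ℤ)) := by
    calc ∑ k ∈ range n, (2*(k:ℤ)+1) * ((k.choose j : ℤ)^r * ((k+j).choose j : ℤ)^r)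
        = ∑ k ∈ range n, ∑ m ∈ range N, (2*(k:ℤ)+1) *
            (a m * ((k.choose m : ℤ) * ((k+m).choose m : ℤ))) := by
          apply Finset.sum_congr rfl
          intro k _
          rw [← mul_pow, ha k, Finset.mul_sum]
      _ = ∑ m ∈ range N, a m * (∑ k ∈ range n, (2*(k:ℤ)+1) *
            ((k.choose m : ℤ) * ((k+m).choose m : ℤ))) := by
          rw [Finset.sum_comm]
          apply Finset.sum_congr rfl
          intro m _
          rw [Finset.mul_sum]
          exact Finset.sum_congr rfl fun k _ => by ring
      _ = _ := by
          apply Finset.sum_congr rfl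
          intro m _
          rw [weighted_sum m n]
  rw [key]
  apply Finset.dvd_sum
  intro m _
  exact Dvd.dvd.mul_left (Dvd.dvd.mul_right (dvd_aux n m hn) _) _

private lemma div_signed (n j r : ℕ) (hn : 0 < n) :
    (n:ℤ) ∣ ∑ k ∈ range n, (-1:ℤ)^k * (2*(k:ℤ)+1) * ((k.choose j : ℤ)^r * ((k+j).choose j : ℤ)^r) := by
  obtain ⟨N, a, ha⟩ := pow_expand j r
  have key : ∑ k ∈ range n, (-1:ℤ)^k * (2*(k:ℤ)+1) * ((k.choose j : ℤ)^r * ((k+j).choose j : ℤ)^r)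
      = ∑ m ∈ range N, a m * ((-1:ℤ)^(n+1) * ((n:ℤ)-(m:ℤ)) * (n.choose m : ℤ) * ((n+m).choose m : ℤ)) := by
    calc ∑ k ∈ range n, (-1:ℤ)^k * (2*(k:ℤ)+1) * ((k.choose j : ℤ)^r * ((k+j).choose j : ℤ)^r)
        = ∑ k ∈ range n, ∑ m ∈ range N, (-1:ℤ)^k * (2*(k:ℤ)+1) *
            (a m * ((k.choose m : ℤ) * ((k+m).choose m : ℤ))) := by
          apply Finset.sum_congr rfl
          intro k _
          rw [← mul_pow, ha k, Finset.mul_sum]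
      _ = ∑ m ∈ range N, a m * (∑ k ∈ range n, (-1:ℤ)^k * (2*(k:ℤ)+1) *
            ((k.choose m : ℤ) * ((k+m).choose m : ℤ))) := by
          rw [Finset.sum_comm]
          apply Finset.sum_congr rfl
          intro m _
          rw [Finset.mul_sum]
          exact Finset.sum_congr rfl fun k _ => by ring
      _ = _ := by
          apply Finset.sum_congr rfl
          intro m _
          rw [weighted_sum_alt m n]
  rw [key]
  apply Finset.dvd_sum
  intro m _
  have e : (-1:ℤ)^(n+1) * ((n:ℤ)-(m:ℤ)) * (n.choose m : ℤ) * ((n+m).choose m : ℤ)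
      = (((n:ℤ)-(m:ℤ)) * (n.choose m : ℤ)) * ((-1:ℤ)^(n+1) * ((n+m).choose m : ℤ)) := by ring
  rw [e]
  exact Dvd.dvd.mul_left (Dvd.dvd.mul_right (dvd_aux n m hn) _) _

theorem schmidt_polynomial_divisibility (n : ℕ) (hn : 0 < n) (r : ℕ) (hr : 2 ≤ r) (x : ℤ) :
    ((n : ℤ) ∣ ∑ k ∈ range n, (2 * k + 1 : ℤ) *
        (∑ j ∈ range (k + 1),
          (k.choose j : ℤ) ^ r * ((k + j).choose j : ℤ) ^ r * x ^ j)) ∧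
    ((n : ℤ) ∣ ∑ k ∈ range n, (-1 : ℤ) ^ k * (2 * k + 1) *
        (∑ j ∈ range (k + 1),
          (k.choose j : ℤ) ^ r * ((k + j).choose j : ℤ) ^ r * x ^ j)) := by
  have hr0 : r ≠ 0 := by omega
  constructor
  · have swap : ∑ k ∈ range n, (2 * (k:ℤ) + 1) *
        (∑ j ∈ range (k + 1), (k.choose j : ℤ) ^ r * ((k + j).choose j : ℤ) ^ r * x ^ j)
        = ∑ j ∈ range n, (∑ k ∈ range n, (2*(k:ℤ)+1) *
            ((k.choose j : ℤ)^r * ((k+j).choose j : ℤ)^r)) * x ^ j := by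
      calc ∑ k ∈ range n, (2 * (k:ℤ) + 1) *
            (∑ j ∈ range (k + 1), (k.choose j : ℤ) ^ r * ((k + j).choose j : ℤ) ^ r * x ^ j)
          = ∑ k ∈ range n, ∑ j ∈ range n,
              (2*(k:ℤ)+1) * ((k.choose j : ℤ)^r * ((k+j).choose j : ℤ)^r) * x ^ j := by
            apply Finset.sum_congr rfl
            intro k hk
            rw [Finset.mul_sum]
            rw [show ∑ j ∈ range (k+1), (2*(k:ℤ)+1) *
                ((k.choose j : ℤ)^r * ((k+j).choose j : ℤ)^r * x^j)
                = ∑ j ∈ range (k+1), (2*(k:ℤ)+1) *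
                ((k.choose j : ℤ)^r * ((k+j).choose j : ℤ)^r) * x^j from
              Finset.sum_congr rfl fun j _ => by ring]
            apply Finset.sum_subset (Finset.range_subset_range.mpr (by
              have := Finset.mem_range.mp hk; omega))
            intro j _ hj
            have hkj : k < j := by
              simp only [Finset.mem_range, not_lt] at hj
              omega
            rw [Nat.choose_eq_zero_of_lt hkj]
            push_cast
            rw [zero_pow hr0]
            ring
        _ = ∑ j ∈ range n, ∑ k ∈ range n,
              (2*(k:ℤ)+1) * ((k.choose j : ℤ)^r * ((k+j).choose j : ℤ)^r) * x ^ j :=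
            Finset.sum_comm
        _ = _ := by
            apply Finset.sum_congr rfl
            intro j _
            rw [Finset.sum_mul]
    rw [swap]
    exact Finset.dvd_sum fun j _ => Dvd.dvd.mul_right (div_unsigned n j r hn) _
  · have swap : ∑ k ∈ range n, (-1:ℤ)^k * (2 * (k:ℤ) + 1) *
        (∑ j ∈ range (k + 1), (k.choose j : ℤ) ^ r * ((k + j).choose j : ℤ) ^ r * x ^ j)
        = ∑ j ∈ range n, (∑ k ∈ range n, (-1:ℤ)^k * (2*(k:ℤ)+1) *
            ((k.choose j : ℤ)^r * ((k+j).choose j : ℤ)^r)) * x ^ j := by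
      calc ∑ k ∈ range n, (-1:ℤ)^k * (2 * (k:ℤ) + 1) *
            (∑ j ∈ range (k + 1), (k.choose j : ℤ) ^ r * ((k + j).choose j : ℤ) ^ r * x ^ j)
          = ∑ k ∈ range n, ∑ j ∈ range n,
              (-1:ℤ)^k * (2*(k:ℤ)+1) * ((k.choose j : ℤ)^r * ((k+j).choose j : ℤ)^r) * x ^ j := by
            apply Finset.sum_congr rfl
            intro k hk
            rw [Finset.mul_sum]
            rw [show ∑ j ∈ range (k+1), (-1:ℤ)^k * (2*(k:ℤ)+1) *
                ((k.choose j : ℤ)^r * ((k+j).choose j : ℤ)^r * x^j)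
                = ∑ j ∈ range (k+1), (-1:ℤ)^k * (2*(k:ℤ)+1) *
                ((k.choose j : ℤ)^r * ((k+j).choose j : ℤ)^r) * x^j from
              Finset.sum_congr rfl fun j _ => by ring]
            apply Finset.sum_subset (Finset.range_subset_range.mpr (by
              have := Finset.mem_range.mp hk; omega))
            intro j _ hj
            have hkj : k < j := by
              simp only [Finset.mem_range, not_lt] at hj
              omega
            rw [Nat.choose_eq_zero_of_lt hkj]
            push_cast
            rw [zero_pow hr0]
            ring
        _ = ∑ j ∈ range n, ∑ k ∈ range n,
              (-1:ℤ)^k * (2*(k:ℤ)+1) * ((k.choose j : ℤ)^r * ((k+j).choose j : ℤ)^r) * x ^ j :=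
            Finset.sum_comm
        _ = _ := by
            apply Finset.sum_congr rfl
            intro j _
            rw [Finset.sum_mul]
    rw [swap]
    exact Finset.dvd_sum fun j _ => Dvd.dvd.mul_right (div_signed n j r hn) _
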